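/- Let G = SL₂(ℂ) act diagonally on V = 3R₁ = ℂ² ⊕ ℂ² ⊕ ℂ². Then G' = G, i.e., the only elements of GL(V) preserving all SL₂-invariant polynomials are the elements of the image of SL₂ acting diagonally. -/

import Mathlib

noncomputable section

/-- A function `V → ℂ` is a polynomial function if it lies in the subalgebra of
functions generated by the linear functionals, i.e. it is given by a polynomial
in linear coordinates. -/
def IsPolyFun {V : Type*} [AddCommGroup V] [Module ℂ V] (f : V → ℂ) : Prop :=
  f ∈ Algebra.adjoin ℂ (Set.range fun l : V →ₗ[ℂ] ℂ => (l : V → ℂ))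

/-- Given a subgroup `G` of `GL(V)`, the group `G'` of all linear automorphisms of `V`
preserving every `G`-invariant polynomial function on `V`. -/
def primeGroup {V : Type*} [AddCommGroup V] [Module ℂ V]
    (G : Subgroup (V ≃ₗ[ℂ] V)) : Subgroup (V ≃ₗ[ℂ] V) where
  carrier := {φ | ∀ f : V → ℂ, IsPolyFun f →
      (∀ g ∈ G, ∀ v : V, f (g v) = f v) → ∀ v : V, f (φ v) = f v}
  one_mem' := by intro f _ _ v; rfl
  mul_mem' := by
    intro a b ha hb f hf hinv v
    have h2 : f (a (b v)) = f (b v) := ha f hf hinv (b v)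
    exact h2.trans (hb f hf hinv v)
  inv_mem' := by
    intro a ha f hf hinv v
    have h := ha f hf hinv (a⁻¹ v)
    have : a (a⁻¹ v) = v := a.apply_symm_apply v
    rw [this] at h
    exact h.symm

/-- The algebraic exponential of an endomorphism of a finite-dimensional space
(intended for nilpotent endomorphisms, where the series is a finite sum). -/
def endExp {g : Type*} [AddCommGroup g] [Module ℂ g] [FiniteDimensional ℂ g]
    (A : Module.End ℂ g) : Module.End ℂ g :=
  ∑ k ∈ Finset.range (Module.finrank ℂ g + 1), (k.factorial : ℂ)⁻¹ • A ^ k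

/-- The adjoint group `G = Aut(g)⁰` of a semisimple Lie algebra `g`: the subgroup of
`GL(g)` generated by the exponentials of nilpotent inner derivations `ad x`. -/
def adjointGroup (g : Type*) [LieRing g] [LieAlgebra ℂ g] [FiniteDimensional ℂ g] :
    Subgroup (g ≃ₗ[ℂ] g) :=
  Subgroup.closure {u : g ≃ₗ[ℂ] g | ∃ x : g,
    IsNilpotent (LieAlgebra.ad ℂ g x) ∧ (u : g →ₗ[ℂ] g) = endExp (LieAlgebra.ad ℂ g x)}

/-- The subgroup of `GL(g)` fixing a subalgebra `t` pointwise. -/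
def pointwiseStab {g : Type*} [LieRing g] [LieAlgebra ℂ g]
    (t : LieSubalgebra ℂ g) : Subgroup (g ≃ₗ[ℂ] g) where
  carrier := {u | ∀ x ∈ t, u x = x}
  one_mem' := by intro x _; rfl
  mul_mem' := by
    intro a b ha hb x hx
    have : a (b x) = a x := by rw [hb x hx]
    exact this.trans (ha x hx)
  inv_mem' := by
    intro a ha x hx
    conv_lhs => rw [← ha x hx]
    exact a.symm_apply_apply x

/-- The maximal torus of the adjoint group corresponding to a Cartan subalgebra `t`:
the elements of the adjoint group acting trivially on `t`. -/
def maximalTorus (g : Type*) [LieRing g] [LieAlgebra ℂ g] [FiniteDimensional ℂ g]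
    (t : LieSubalgebra ℂ g) : Subgroup (g ≃ₗ[ℂ] g) :=
  adjointGroup g ⊓ pointwiseStab t

namespace Stmt13

/-- `SL₂(ℂ)` acting diagonally on `3R₁ = ℂ² ⊕ ℂ² ⊕ ℂ²`. -/
def diagSL2 : Matrix.SpecialLinearGroup (Fin 2) ℂ →*
    ((Fin 3 → Fin 2 → ℂ) ≃ₗ[ℂ] (Fin 3 → Fin 2 → ℂ)) :=
  MonoidHom.mk' (fun g => LinearEquiv.piCongrRight
      (fun _ : Fin 3 => Matrix.SpecialLinearGroup.toLin' g)) (by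
    intro a b
    apply LinearEquiv.ext
    intro v
    funext i
    simp [map_mul])


def dd (i j : Fin 3) (v : Fin 3 → Fin 2 → ℂ) : ℂ := v i 0 * v j 1 - v i 1 * v j 0

lemma coord_mem (i : Fin 3) (k : Fin 2) :
    (fun v : Fin 3 → Fin 2 → ℂ => v i k) ∈ Algebra.adjoin ℂ
      (Set.range fun l : (Fin 3 → Fin 2 → ℂ) →ₗ[ℂ] ℂ => (l : (Fin 3 → Fin 2 → ℂ) → ℂ)) := by
  exact Algebra.subset_adjoin
    ⟨((LinearMap.proj k).comp
        (LinearMap.proj i : (Fin 3 → Fin 2 → ℂ) →ₗ[ℂ] (Fin 2 → ℂ)) :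
        (Fin 3 → Fin 2 → ℂ) →ₗ[ℂ] ℂ), rfl⟩

lemma isPolyFun_dd (i j : Fin 3) : IsPolyFun (dd i j) :=
  sub_mem (mul_mem (coord_mem i 0) (coord_mem j 1)) (mul_mem (coord_mem i 1) (coord_mem j 0))

lemma dd_invariant (i j : Fin 3) (A : Matrix.SpecialLinearGroup (Fin 2) ℂ)
    (v : Fin 3 → Fin 2 → ℂ) : dd i j (diagSL2 A v) = dd i j v := by
  have hdet : A.1 0 0 * A.1 1 1 - A.1 0 1 * A.1 1 0 = 1 := by
    have := A.2
    rwa [Matrix.det_fin_two] at this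
  simp only [dd, diagSL2, MonoidHom.mk'_apply, LinearEquiv.piCongrRight_apply,
    Matrix.SpecialLinearGroup.toLin'_apply, Matrix.toLin'_apply, Matrix.mulVec,
    dotProduct, Fin.sum_univ_two]
  linear_combination (v i 0 * v j 1 - v i 1 * v j 0) * hdet

lemma rad_pres (φ : (Fin 3 → Fin 2 → ℂ) ≃ₗ[ℂ] (Fin 3 → Fin 2 → ℂ)) {i j : Fin 3}
    (h : ∀ v, dd i j (φ v) = dd i j v)
    {v : Fin 3 → Fin 2 → ℂ} (hv : ∀ z, dd i j (v + z) = dd i j z) :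
    ∀ z, dd i j (φ v + z) = dd i j z := by
  intro z
  calc dd i j (φ v + z) = dd i j (φ (v + φ.symm z)) := by rw [map_add, φ.apply_symm_apply]
    _ = dd i j (v + φ.symm z) := h _
    _ = dd i j (φ.symm z) := hv _
    _ = dd i j (φ (φ.symm z)) := (h _).symm
    _ = dd i j z := by rw [φ.apply_symm_apply]

lemma rad_zero (u : Fin 3 → Fin 2 → ℂ) {i j : Fin 3} (hij : i ≠ j)
    (key : ∀ z, dd i j (u + z) = dd i j z) : u i = 0 ∧ u j = 0 := by
  have k0 := key 0
  have k1 := key (Pi.single i ![1,0])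
  have k2 := key (Pi.single i ![0,1])
  have k3 := key (Pi.single j ![1,0])
  have k4 := key (Pi.single j ![0,1])
  simp [dd, Pi.single_eq_same, Pi.single_eq_of_ne hij, Pi.single_eq_of_ne (Ne.symm hij)]
    at k0 k1 k2 k3 k4
  refine ⟨funext fun k => ?_, funext fun k => ?_⟩ <;> fin_cases k
  · show u i 0 = 0; linear_combination k4 - k0
  · show u i 1 = 0; linear_combination k0 - k3
  · show u j 0 = 0; linear_combination k0 - k2
  · show u j 1 = 0; linear_combination k1 - k0


/-- Let `G = SL₂(ℂ)` act diagonally on `V = 3R₁ = ℂ² ⊕ ℂ² ⊕ ℂ²`.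
Then `G' = G`: the only elements of `GL(V)` preserving all `SL₂`-invariant polynomials
are the elements of the image of `SL₂` acting diagonally. -/
theorem stmt13 : primeGroup diagSL2.range = diagSL2.range := by
  apply le_antisymm
  · intro φ hφ
    have hφ' : ∀ f : (Fin 3 → Fin 2 → ℂ) → ℂ, IsPolyFun f →
        (∀ g ∈ diagSL2.range, ∀ v, f (g v) = f v) → ∀ v, f (φ v) = f v := hφ
    have hpres : ∀ i j : Fin 3, ∀ v, dd i j (φ v) = dd i j v := by
      intro i j v
      refine hφ' (dd i j) (isPolyFun_dd i j) ?_ v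
      rintro g ⟨A, rfl⟩ v'
      exact dd_invariant i j A v'
    have h01 := hpres 0 1
    have h02 := hpres 0 2
    have h12 := hpres 1 2
    -- the linear map acting on each column
    set g : (Fin 2 → ℂ) → (Fin 2 → ℂ) := fun w => φ ![w, 0, 0] 0 with hg
    -- φ preserves the first coordinate subspace
    have F0 : ∀ w : Fin 2 → ℂ, φ ![w, 0, 0] = ![g w, 0, 0] := by
      intro w
      have hv : ∀ z, dd 1 2 ((![w, 0, 0] : Fin 3 → Fin 2 → ℂ) + z) = dd 1 2 z := by
        intro z; simp [dd]
      obtain ⟨e1, e2⟩ := rad_zero (φ ![w, 0, 0]) (by decide : (1 : Fin 3) ≠ 2)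
        (rad_pres φ h12 hv)
      funext i; fin_cases i <;> simp [hg, e1, e2]
    have F1' : ∀ w : Fin 2 → ℂ, φ ![0, w, 0] = ![0, φ ![0, w, 0] 1, 0] := by
      intro w
      have hv : ∀ z, dd 0 2 ((![0, w, 0] : Fin 3 → Fin 2 → ℂ) + z) = dd 0 2 z := by
        intro z; simp [dd]
      obtain ⟨e1, e2⟩ := rad_zero (φ ![0, w, 0]) (by decide : (0 : Fin 3) ≠ 2)
        (rad_pres φ h02 hv)
      funext i; fin_cases i <;> simp [e1, e2]
    have F2' : ∀ w : Fin 2 → ℂ, φ ![0, 0, w] = ![0, 0, φ ![0, 0, w] 2] := by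
      intro w
      have hv : ∀ z, dd 0 1 ((![0, 0, w] : Fin 3 → Fin 2 → ℂ) + z) = dd 0 1 z := by
        intro z; simp [dd]
      obtain ⟨e1, e2⟩ := rad_zero (φ ![0, 0, w]) (by decide : (0 : Fin 3) ≠ 1)
        (rad_pres φ h01 hv)
      funext i; fin_cases i <;> simp [e1, e2]
    -- the middle copy transforms by the same g
    have F1 : ∀ w : Fin 2 → ℂ, φ ![0, w, 0] = ![0, g w, 0] := by
      intro w
      rw [F1' w]
      suffices h : φ ![0, w, 0] 1 = g w by rw [h]
      set x := g w with hx
      set y := φ ![0, w, 0] 1 with hy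
      have hsplit : (![w, w, 0] : Fin 3 → Fin 2 → ℂ) = ![w, 0, 0] + ![0, w, 0] := by
        funext i; fin_cases i <;> simp
      have hu : φ ![w, w, 0] = ![x, y, 0] := by
        rw [hsplit, map_add, F0, F1']
        funext i; fin_cases i <;> simp [hx, hy]
      have key : ∀ z : Fin 3 → Fin 2 → ℂ,
          dd 0 2 (φ ![w, w, 0] + z) - dd 1 2 (φ ![w, w, 0] + z) = dd 0 2 z - dd 1 2 z := by
        intro z
        have hrad : ∀ y' : Fin 3 → Fin 2 → ℂ,
            dd 0 2 ((![w, w, 0] : Fin 3 → Fin 2 → ℂ) + y')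
              - dd 1 2 ((![w, w, 0] : Fin 3 → Fin 2 → ℂ) + y')
            = dd 0 2 y' - dd 1 2 y' := by
          intro y'; simp [dd]; ring
        calc dd 0 2 (φ ![w, w, 0] + z) - dd 1 2 (φ ![w, w, 0] + z)
            = dd 0 2 (φ ((![w, w, 0] : Fin 3 → Fin 2 → ℂ) + φ.symm z))
              - dd 1 2 (φ ((![w, w, 0] : Fin 3 → Fin 2 → ℂ) + φ.symm z)) := by
              rw [map_add, φ.apply_symm_apply]
          _ = dd 0 2 ((![w, w, 0] : Fin 3 → Fin 2 → ℂ) + φ.symm z)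
              - dd 1 2 ((![w, w, 0] : Fin 3 → Fin 2 → ℂ) + φ.symm z) := by rw [h02, h12]
          _ = dd 0 2 (φ.symm z) - dd 1 2 (φ.symm z) := hrad _
          _ = dd 0 2 (φ (φ.symm z)) - dd 1 2 (φ (φ.symm z)) := by rw [h02, h12]
          _ = dd 0 2 z - dd 1 2 z := by rw [φ.apply_symm_apply]
      have k1 := key ![0, 0, ![1, 0]]
      have k2 := key ![0, 0, ![0, 1]]
      rw [hu] at k1 k2
      simp [dd, Matrix.vecHead, Matrix.vecTail] at k1 k2
      funext k; fin_cases k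
      · show y 0 = x 0; linear_combination -k2
      · show y 1 = x 1; linear_combination k1
    -- the third copy transforms by the same g
    have F2 : ∀ w : Fin 2 → ℂ, φ ![0, 0, w] = ![0, 0, g w] := by
      intro w
      rw [F2' w]
      suffices h : φ ![0, 0, w] 2 = g w by rw [h]
      set x := g w with hx
      set y := φ ![0, 0, w] 2 with hy
      have hsplit : (![w, 0, -w] : Fin 3 → Fin 2 → ℂ) = ![w, 0, 0] - ![0, 0, w] := by
        funext i; fin_cases i <;> simp
      have hu : φ ![w, 0, -w] = ![x, 0, -y] := by
        rw [hsplit, map_sub, F0, F2']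
        funext i; fin_cases i <;> simp [hx, hy]
      have key : ∀ z : Fin 3 → Fin 2 → ℂ,
          dd 0 1 (φ ![w, 0, -w] + z) - dd 1 2 (φ ![w, 0, -w] + z) = dd 0 1 z - dd 1 2 z := by
        intro z
        have hrad : ∀ y' : Fin 3 → Fin 2 → ℂ,
            dd 0 1 ((![w, 0, -w] : Fin 3 → Fin 2 → ℂ) + y')
              - dd 1 2 ((![w, 0, -w] : Fin 3 → Fin 2 → ℂ) + y')
            = dd 0 1 y' - dd 1 2 y' := by
          intro y'; simp [dd]; ring
        calc dd 0 1 (φ ![w, 0, -w] + z) - dd 1 2 (φ ![w, 0, -w] + z)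
            = dd 0 1 (φ ((![w, 0, -w] : Fin 3 → Fin 2 → ℂ) + φ.symm z))
              - dd 1 2 (φ ((![w, 0, -w] : Fin 3 → Fin 2 → ℂ) + φ.symm z)) := by
              rw [map_add, φ.apply_symm_apply]
          _ = dd 0 1 ((![w, 0, -w] : Fin 3 → Fin 2 → ℂ) + φ.symm z)
              - dd 1 2 ((![w, 0, -w] : Fin 3 → Fin 2 → ℂ) + φ.symm z) := by rw [h01, h12]
          _ = dd 0 1 (φ.symm z) - dd 1 2 (φ.symm z) := hrad _
          _ = dd 0 1 (φ (φ.symm z)) - dd 1 2 (φ (φ.symm z)) := by rw [h01, h12]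
          _ = dd 0 1 z - dd 1 2 z := by rw [φ.apply_symm_apply]
      have k1 := key ![0, ![1, 0], 0]
      have k2 := key ![0, ![0, 1], 0]
      rw [hu] at k1 k2
      simp [dd, Matrix.vecHead, Matrix.vecTail] at k1 k2
      funext k; fin_cases k
      · show y 0 = x 0; linear_combination -k2
      · show y 1 = x 1; linear_combination k1
    -- the matrix of g
    set A : Matrix (Fin 2) (Fin 2) ℂ :=
      Matrix.of fun k l => g ![if l = 0 then 1 else 0, if l = 0 then 0 else 1] k with hA
    have hcol0 : ∀ k, A k 0 = g ![1, 0] k := by intro k; simp [hA]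
    have hcol1 : ∀ k, A k 1 = g ![0, 1] k := by intro k; simp [hA]
    -- linearity of g
    have glin : ∀ x : Fin 2 → ℂ, g x = fun k => A k 0 * x 0 + A k 1 * x 1 := by
      intro x
      have hx : (![x, 0, 0] : Fin 3 → Fin 2 → ℂ)
          = x 0 • ![![1, 0], 0, 0] + x 1 • ![![0, 1], 0, 0] := by
        funext i k; fin_cases i <;> fin_cases k <;> simp [Matrix.vecHead, Matrix.vecTail]
      have : φ ![x, 0, 0] = x 0 • φ ![![1, 0], 0, 0] + x 1 • φ ![![0, 1], 0, 0] := by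
        rw [hx, map_add, map_smul, map_smul]
      funext k
      have := congrFun (congrFun this 0) k
      simp only [hg] at this ⊢
      rw [this]
      simp [hcol0, hcol1]
      ring
    -- determinant of A is 1
    have hdetA : A.det = 1 := by
      rw [Matrix.det_fin_two]
      have hsplit : (![![1, 0], ![0, 1], 0] : Fin 3 → Fin 2 → ℂ)
          = ![![1, 0], 0, 0] + ![0, ![0, 1], 0] := by
        funext i; fin_cases i <;> simp
      have hv := h01 ![![1, 0], ![0, 1], 0]
      rw [hsplit, map_add, F0, F1] at hv
      simp [dd] at hv
      rw [hcol0 0, hcol0 1, hcol1 0, hcol1 1]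
      linear_combination hv
    refine ⟨⟨A, hdetA⟩, ?_⟩
    apply LinearEquiv.ext
    intro v
    have hsplit : v = ![v 0, 0, 0] + ![0, v 1, 0] + ![0, 0, v 2] := by
      funext i; fin_cases i <;> simp
    have hφv : φ v = ![g (v 0), g (v 1), g (v 2)] := by
      conv_lhs => rw [hsplit]
      rw [map_add, map_add, F0, F1, F2]
      funext i; fin_cases i <;> simp
    rw [hφv]
    funext i k
    have : (diagSL2 ⟨A, hdetA⟩) v i k = A.mulVec (v i) k := by
      simp only [diagSL2, MonoidHom.mk'_apply, LinearEquiv.piCongrRight_apply,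
        Matrix.SpecialLinearGroup.toLin'_apply, Matrix.toLin'_apply]
      rfl
    rw [this]
    have := congrFun (glin (v i)) k
    fin_cases i <;> fin_cases k <;>
      simp [Matrix.mulVec, dotProduct, Fin.sum_univ_two, glin]
  · rintro ψ ⟨A, rfl⟩
    intro f _ hinv v
    exact hinv _ ⟨A, rfl⟩ v

end Stmt13
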